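/- arXiv:1404.5690 — 5 statements merged into one kernel-verified Lean document; each statement's English description precedes it below -/
import Mathlib

section
/- The conformal moduli space of a finite simple graph G, i.e., the quotient of the space of weights by conformal equivalence, is isomorphic (as a set/vector space under the logarithm identification) to ℝ^{|E| − |V| + ω₀}, where ω₀ is the number of bipartite connected components of G. -/
open SimpleGraph

/-- A connected component `c` of `G` is bipartite if its vertices admit a proper
2-coloring (equivalently, it contains no odd cycle). -/
def IsBipartiteComponent {V : Type*} (G : SimpleGraph V) (c : G.ConnectedComponent) : Prop :=
  ∃ f : V → Bool, ∀ v w, G.Adj v w → G.connectedComponentMk v = c → f v ≠ f w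

/-- The number of bipartite connected components of `G`. -/
noncomputable def numBipartiteComponents {V : Type*} (G : SimpleGraph V) : ℕ :=
  Nat.card {c : G.ConnectedComponent // IsBipartiteComponent G c}

/-- The unsigned vertex-edge incidence matrix of `G` over `ℝ`. -/
def incidenceMatrixUnsigned {V : Type*} [Fintype V] [DecidableEq V] (G : SimpleGraph V)
    [DecidableRel G.Adj] : Matrix V G.edgeSet ℝ :=
  Matrix.of fun v e => if v ∈ (e : Sym2 V) then 1 else 0

section Aux

variable {V : Type*} [Fintype V] [DecidableEq V] (G : SimpleGraph V) [DecidableRel G.Adj]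

lemma sum_ite_pair {a b : V} (hab : a ≠ b) (u : V → ℝ) :
    ∑ v, (if v = a ∨ v = b then u v else 0) = u a + u b := by
  rw [show (fun v => if v = a ∨ v = b then u v else 0) =
      fun v => (if v = a then u v else 0) + (if v = b then u v else 0) from
    funext fun v => by
      by_cases h1 : v = a <;> by_cases h2 : v = b <;> simp_all]
  rw [Finset.sum_add_distrib]
  simp

lemma apply_edge (u : V → ℝ) {a b : V} (hab : G.Adj a b) :
    (incidenceMatrixUnsigned G).transpose.mulVecLin u ⟨s(a, b), hab⟩ = u a + u b := by
  simp only [Matrix.mulVecLin_apply, Matrix.mulVec, dotProduct,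
    Matrix.transpose_apply, incidenceMatrixUnsigned, Matrix.of_apply]
  simp_rw [Sym2.mem_iff, ite_mul, one_mul, zero_mul]
  exact sum_ite_pair hab.ne u

/-- Membership in the kernel of `Bᵀ` means `u a + u b = 0` across every edge. -/
lemma mem_ker_iff (u : V → ℝ) :
    u ∈ LinearMap.ker (incidenceMatrixUnsigned G).transpose.mulVecLin ↔
      ∀ a b, G.Adj a b → u a + u b = 0 := by
  constructor
  · intro h a b hab
    have := congrFun (LinearMap.mem_ker.mp h) ⟨s(a, b), hab⟩
    rwa [apply_edge G u hab] at this
  · intro h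
    apply LinearMap.mem_ker.mpr
    funext e
    obtain ⟨e, he⟩ := e
    induction e with
    | h a b => exact (apply_edge G u he).trans (h a b he)

variable {G}

/-- Along a walk, a kernel vector alternates in sign. -/
lemma walk_sign {u : V → ℝ} (h : ∀ a b, G.Adj a b → u a + u b = 0)
    {v w : V} (p : G.Walk v w) : u w = (-1 : ℝ) ^ p.length * u v := by
  induction p with
  | nil => simp
  | @cons a b c hab p ih =>
    have hb : u b = -u a := by linarith [h a b hab]
    rw [ih, hb, SimpleGraph.Walk.length_cons, pow_succ]
    ring

lemma reachable_zero {u : V → ℝ} (h : ∀ a b, G.Adj a b → u a + u b = 0)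
    {v w : V} (hr : G.Reachable v w) (hv : u v = 0) : u w = 0 := by
  obtain ⟨p⟩ := hr
  rw [walk_sign h p, hv, mul_zero]

/-- If a kernel vector is nonzero at `v`, the component of `v` is bipartite. -/
lemma bipartite_of_ne_zero {u : V → ℝ} (h : ∀ a b, G.Adj a b → u a + u b = 0)
    {v : V} (hv : u v ≠ 0) : IsBipartiteComponent G (G.connectedComponentMk v) := by
  refine ⟨fun w => decide (0 < u w), fun a b hab hc hfab => ?_⟩
  have ha : u a ≠ 0 := by
    intro h0
    exact hv (reachable_zero h (ConnectedComponent.exact hc) h0)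
  have hb : u b = -u a := by linarith [h a b hab]
  have hfab' : decide (0 < u a) = decide (0 < u b) := hfab
  rw [hb, decide_eq_decide] at hfab'
  rcases ha.lt_or_gt with h' | h'
  · exact absurd (hfab'.mpr (by linarith)) (not_lt.mpr h'.le)
  · have := hfab'.mp h'
    linarith

end Aux

/-- Under the logarithm identification, the space of weights is `ℝ^{|E|}` and the
conformal class of any weight is a coset of the image of `Bᵀ`.  The conformal moduli
space, i.e. the quotient of the space of weights by conformal equivalence, is linearly
isomorphic to `ℝ^{|E| − |V| + ω₀}`, where `ω₀` is the number of bipartite components. -/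
theorem moduli_space_iso {V : Type*} [Fintype V] [DecidableEq V]
    (G : SimpleGraph V) [DecidableRel G.Adj] :
    Nonempty (((G.edgeSet → ℝ) ⧸
        LinearMap.range (incidenceMatrixUnsigned G).transpose.mulVecLin) ≃ₗ[ℝ]
      (Fin (Fintype.card G.edgeSet -
        (Fintype.card V - numBipartiteComponents G)) → ℝ)) := by
  classical
  set B := (incidenceMatrixUnsigned G).transpose.mulVecLin with hB
  letI : Fintype {c : G.ConnectedComponent // IsBipartiteComponent G c} := Fintype.ofFinite _
  have hmkout : ∀ c : G.ConnectedComponent, G.connectedComponentMk c.out = c :=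
    fun c => c.out_eq
  -- a fixed 2-coloring on each bipartite component
  let F : G.ConnectedComponent → V → Bool := fun c =>
    if h : IsBipartiteComponent G c then h.choose else fun _ => false
  have hF : ∀ c, IsBipartiteComponent G c →
      ∀ v w, G.Adj v w → G.connectedComponentMk v = c → F c v ≠ F c w := by
    intro c hc v w hvw hv
    simp only [F, dif_pos hc]
    exact hc.choose_spec v w hvw hv
  -- the evaluation map from the kernel to ℝ^{bipartite components}
  let Φ : LinearMap.ker B →ₗ[ℝ]
      ({c : G.ConnectedComponent // IsBipartiteComponent G c} → ℝ) :=
    { toFun := fun u c => (u : V → ℝ) c.val.out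
      map_add' := fun u v => rfl
      map_smul' := fun r u => rfl }
  have hΦinj : Function.Injective Φ := by
    intro u w huw
    ext v
    have hker : ∀ x : LinearMap.ker B, ∀ a b, G.Adj a b → (x : V → ℝ) a + (x : V → ℝ) b = 0 :=
      fun x => (mem_ker_iff G _).mp x.2
    suffices H : ∀ x : LinearMap.ker B, Φ x = 0 → ∀ v, (x : V → ℝ) v = 0 by
      have h1 := H (u - w) (by rw [map_sub, huw, sub_self]) v
      simpa [sub_eq_zero] using h1
    intro x hx v
    by_contra hv
    have hbip := bipartite_of_ne_zero (hker x) hv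
    have h0 : (x : V → ℝ) (G.connectedComponentMk v).out = 0 :=
      congrFun hx ⟨_, hbip⟩
    exact hv (reachable_zero (hker x)
      (ConnectedComponent.exact (by rw [hmkout])) h0)
  have hΦsurj : Function.Surjective Φ := by
    intro a
    -- build the kernel vector supported on bipartite components
    let u : V → ℝ := fun v =>
      if h : IsBipartiteComponent G (G.connectedComponentMk v) then
        (if F (G.connectedComponentMk v) v =
            F (G.connectedComponentMk v) (G.connectedComponentMk v).out then 1 else -1) *
          a ⟨_, h⟩
      else 0
    have hu : ∀ x y, G.Adj x y → u x + u y = 0 := by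
      intro x y hxy
      have hcomp : G.connectedComponentMk x = G.connectedComponentMk y :=
        ConnectedComponent.sound hxy.reachable
      by_cases h : IsBipartiteComponent G (G.connectedComponentMk x)
      · have h' : IsBipartiteComponent G (G.connectedComponentMk y) := hcomp ▸ h
        simp only [u, dif_pos h, dif_pos h']
        have hax : (⟨G.connectedComponentMk y, h'⟩ :
            {c : G.ConnectedComponent // IsBipartiteComponent G c}) =
            ⟨G.connectedComponentMk x, h⟩ := Subtype.ext hcomp.symm
        rw [hax, ← hcomp]
        have hfxy : F (G.connectedComponentMk x) x ≠ F (G.connectedComponentMk x) y :=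
          hF _ h x y hxy rfl
        set f := F (G.connectedComponentMk x)
        set o := (G.connectedComponentMk x).out
        by_cases h1 : f x = f o <;> by_cases h2 : f y = f o
        · exact absurd (h1.trans h2.symm) hfxy
        · rw [if_pos h1, if_neg h2]; ring
        · rw [if_neg h1, if_pos h2]; ring
        · exact absurd (by revert h1 h2; cases f x <;> cases f y <;> cases f o <;> simp) hfxy
      · have h' : ¬ IsBipartiteComponent G (G.connectedComponentMk y) := hcomp ▸ h
        simp [u, dif_neg h, dif_neg h']
    refine ⟨⟨u, (mem_ker_iff G u).mpr hu⟩, ?_⟩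
    funext c
    obtain ⟨c, hc⟩ := c
    have hout : G.connectedComponentMk c.out = c := hmkout c
    have hc' : IsBipartiteComponent G (G.connectedComponentMk c.out) := by
      rw [hout]; exact hc
    show u c.out = a ⟨c, hc⟩
    simp only [u, dif_pos hc']
    have hax : (⟨G.connectedComponentMk c.out, hc'⟩ :
        {c : G.ConnectedComponent // IsBipartiteComponent G c}) = ⟨c, hc⟩ := Subtype.ext hout
    rw [hax, hout, if_pos rfl, one_mul]
  have hkerrank : Module.finrank ℝ (LinearMap.ker B) = numBipartiteComponents G := by
    rw [(LinearEquiv.ofBijective Φ ⟨hΦinj, hΦsurj⟩).finrank_eq, Module.finrank_pi,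
      numBipartiteComponents, Nat.card_eq_fintype_card]
  have hrn := LinearMap.finrank_range_add_finrank_ker B
  rw [Module.finrank_pi, hkerrank] at hrn
  have hq := Submodule.finrank_quotient_add_finrank (LinearMap.range B)
  rw [Module.finrank_pi] at hq
  refine FiniteDimensional.nonempty_linearEquiv_of_finrank_eq ?_
  rw [Module.finrank_pi, Fintype.card_fin]
  omega
end

section
/- In each conformal class of weights on a finite simple graph G, there exists a unique representative w̄ such that for every vertex v, the product of w̄(e) over all edges e incident to v equals 1. -/
open SimpleGraph Finset RealInnerProductSpace

section Aux

variable {V : Type*} [Fintype V] [DecidableEq V] (G : SimpleGraph V) [DecidableRel G.Adj]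

private lemma nbr_swap (f : V → V → ℝ) :
    ∑ v, ∑ j ∈ G.neighborFinset v, f v j = ∑ v, ∑ j ∈ G.neighborFinset v, f j v := by
  have key : ∀ g : V → V → ℝ, ∑ v, ∑ j ∈ G.neighborFinset v, g v j
      = ∑ v, ∑ j, if G.Adj v j then g v j else 0 := by
    intro g
    refine Finset.sum_congr rfl fun v _ => ?_
    rw [← Finset.sum_filter]
    refine Finset.sum_congr ?_ fun _ _ => rfl
    ext j; simp [SimpleGraph.mem_neighborFinset]
  rw [key, key]
  rw [Finset.sum_comm]
  refine Finset.sum_congr rfl fun v _ => Finset.sum_congr rfl fun j _ => ?_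
  simp [G.adj_comm]

private lemma sum_incident (v : V) (F : G.edgeSet → ℝ) :
    ∑ e ∈ univ.filter (fun e : G.edgeSet => v ∈ (e : Sym2 V)), F e
      = ∑ j ∈ G.neighborFinset v, if h : G.Adj v j then F ⟨s(v, j), h⟩ else 0 := by
  have hmem : ∀ e : G.edgeSet, e ∈ univ.filter (fun e : G.edgeSet => v ∈ (e : Sym2 V)) →
      v ∈ (e : Sym2 V) := by
    intro e he; exact (Finset.mem_filter.mp he).2
  refine Finset.sum_bij' (fun e he => Sym2.Mem.other' (hmem e he))
    (fun j hj => (⟨s(v, j), (SimpleGraph.mem_neighborFinset G v j).mp hj⟩ : G.edgeSet))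
    ?_ ?_ ?_ ?_ ?_
  · intro e he
    have h2 := e.2
    rw [← Sym2.other_spec' (hmem e he)] at h2
    exact (SimpleGraph.mem_neighborFinset G v _).mpr (G.mem_edgeSet.mp h2)
  · intro j hj
    simp [Sym2.mem_mk_left]
  · intro e he
    exact Subtype.ext (Sym2.other_spec' (hmem e he))
  · intro j hj
    have h := Sym2.other_spec' (Sym2.mem_mk_left v j)
    exact Sym2.congr_right.mp h
  · intro e he
    have hadj : G.Adj v (Sym2.Mem.other' (hmem e he)) := by
      have h2 := e.2
      rw [← Sym2.other_spec' (hmem e he)] at h2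
      exact G.mem_edgeSet.mp h2
    rw [dif_pos hadj]
    congr 1
    exact (Subtype.ext (Sym2.other_spec' (hmem e he))).symm

private lemma edge_zero {d : V → ℝ} (h : ∀ v, ∑ j ∈ G.neighborFinset v, (d v + d j) = 0)
    {i j : V} (hij : G.Adj i j) : d i + d j = 0 := by
  have hS : ∑ v, ∑ k ∈ G.neighborFinset v, (d v + d k) * (d v + d k) = 0 := by
    have h1 : ∑ v, ∑ k ∈ G.neighborFinset v, (d v + d k) * d v = 0 := by
      refine Finset.sum_eq_zero fun v _ => ?_
      rw [← Finset.sum_mul, h v, zero_mul]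
    have h2 : ∑ v, ∑ k ∈ G.neighborFinset v, (d v + d k) * d k = 0 := by
      rw [nbr_swap G (fun v k => (d v + d k) * d k)]
      calc ∑ v, ∑ k ∈ G.neighborFinset v, (d k + d v) * d v
          = ∑ v, ∑ k ∈ G.neighborFinset v, (d v + d k) * d v := by
            refine Finset.sum_congr rfl fun v _ => Finset.sum_congr rfl fun k _ => by ring
        _ = 0 := h1
    calc ∑ v, ∑ k ∈ G.neighborFinset v, (d v + d k) * (d v + d k)
        = ∑ v, ((∑ k ∈ G.neighborFinset v, (d v + d k) * d v)
            + ∑ k ∈ G.neighborFinset v, (d v + d k) * d k) := by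
          refine Finset.sum_congr rfl fun v _ => ?_
          rw [← Finset.sum_add_distrib]
          refine Finset.sum_congr rfl fun k _ => by ring
      _ = (∑ v, ∑ k ∈ G.neighborFinset v, (d v + d k) * d v)
            + ∑ v, ∑ k ∈ G.neighborFinset v, (d v + d k) * d k := Finset.sum_add_distrib
      _ = 0 := by rw [h1, h2, add_zero]
  have houter := (Finset.sum_eq_zero_iff_of_nonneg (fun v _ =>
      Finset.sum_nonneg fun k _ => mul_self_nonneg _)).mp hS
  have hinner := (Finset.sum_eq_zero_iff_of_nonneg (fun k _ =>
      mul_self_nonneg (d i + d k))).mp (houter i (Finset.mem_univ i))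
  exact mul_self_eq_zero.mp (hinner j ((SimpleGraph.mem_neighborFinset G i j).mpr hij))

private lemma exists_u (f : V → V → ℝ) (hf : ∀ i j, f i j = f j i)
    (hf0 : ∀ i j, ¬ G.Adj i j → f i j = 0) :
    ∃ u : V → ℝ, ∀ v, ∑ j ∈ G.neighborFinset v, (u v + u j + f v j) = 0 := by
  classical
  let T : EuclideanSpace ℝ V →ₗ[ℝ] EuclideanSpace ℝ V :=
    { toFun := fun u => (WithLp.toLp 2 (fun v => ∑ j ∈ G.neighborFinset v, (u v + u j)) : EuclideanSpace ℝ V)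
      map_add' := by
        intro x y; ext v
        simp only [PiLp.add_apply, Pi.add_apply, PiLp.toLp_apply]
        rw [← Finset.sum_add_distrib]
        exact Finset.sum_congr rfl fun j _ => by ring
      map_smul' := by
        intro c x; ext v
        simp only [PiLp.toLp_apply, PiLp.smul_apply, Pi.smul_apply, smul_eq_mul, RingHom.id_apply]
        rw [Finset.mul_sum]
        exact Finset.sum_congr rfl fun j _ => by ring }
  have hinner : ∀ x y : EuclideanSpace ℝ V, ⟪x, y⟫ = ∑ v, x v * y v := by
    intro x y
    simp [PiLp.inner_apply, RCLike.inner_apply, mul_comm]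
  have hSsym : ∀ a b : V → ℝ, ∑ v, ∑ j ∈ G.neighborFinset v, (a v + a j) * b v
      = ∑ v, ∑ j ∈ G.neighborFinset v, (b v + b j) * a v := by
    intro a b
    have h1 := nbr_swap G (fun v j => (a v + a j) * b v)
    have h2 := nbr_swap G (fun v j => (b v + b j) * a v)
    have h3 : ∑ v, ∑ j ∈ G.neighborFinset v, ((a v + a j) * b v + (a j + a v) * b j)
        = ∑ v, ∑ j ∈ G.neighborFinset v, ((b v + b j) * a v + (b j + b v) * a j) := by
      refine Finset.sum_congr rfl fun v _ => Finset.sum_congr rfl fun j _ => by ring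
    have h4 : ∀ g h : V → V → ℝ,
        ∑ v, ∑ j ∈ G.neighborFinset v, (g v j + h v j)
        = (∑ v, ∑ j ∈ G.neighborFinset v, g v j) + ∑ v, ∑ j ∈ G.neighborFinset v, h v j := by
      intro g h
      rw [← Finset.sum_add_distrib]
      exact Finset.sum_congr rfl fun v _ => Finset.sum_add_distrib
    rw [h4, h4] at h3
    rw [← h1, ← h2] at h3
    linarith
  have hsym : ∀ x y : EuclideanSpace ℝ V, ⟪T x, y⟫ = ⟪x, T y⟫ := by
    intro x y
    rw [hinner, hinner]
    have hL : ∀ v, (T x) v * y v = (∑ j ∈ G.neighborFinset v, (x v + x j)) * y v := fun v => rfl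
    have hR : ∀ v, x v * (T y) v = (∑ j ∈ G.neighborFinset v, (y v + y j)) * x v := fun v => by
      simp [T]; ring
    calc ∑ v, (T x) v * y v
        = ∑ v, ∑ j ∈ G.neighborFinset v, (x v + x j) * y v := by
          refine Finset.sum_congr rfl fun v _ => ?_
          rw [hL v, Finset.sum_mul]
      _ = ∑ v, ∑ j ∈ G.neighborFinset v, (y v + y j) * x v := hSsym x y
      _ = ∑ v, x v * (T y) v := by
          refine Finset.sum_congr rfl fun v _ => ?_
          rw [hR v, Finset.sum_mul]
  let b0 : EuclideanSpace ℝ V := WithLp.toLp 2 (fun v => -∑ j ∈ G.neighborFinset v, f v j)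
  let K := LinearMap.range T
  obtain ⟨y, hy, z, hz, hbz⟩ := K.exists_add_mem_mem_orthogonal b0
  have hTz : T z = 0 := by
    have h0 : ∀ x : EuclideanSpace ℝ V, ⟪x, T z⟫ = 0 := by
      intro x
      rw [← hsym]
      exact (Submodule.mem_orthogonal K z).mp hz (T x) (LinearMap.mem_range_self T x)
    have := h0 (T z)
    rwa [inner_self_eq_zero] at this
  have hzedge : ∀ {i j : V}, G.Adj i j → z i + z j = 0 := by
    intro i j hij
    refine edge_zero G (fun v => ?_) hij
    have := congrFun (congrArg (fun (g : EuclideanSpace ℝ V) => (g : V → ℝ)) hTz) v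
    simpa [T] using this
  have hbz0 : ⟪b0, z⟫ = 0 := by
    rw [hinner]
    have h5 : ∑ v, b0 v * z v = -∑ v, ∑ j ∈ G.neighborFinset v, f v j * z v := by
      rw [← Finset.sum_neg_distrib]
      refine Finset.sum_congr rfl fun v _ => ?_
      simp only [b0]
      rw [neg_mul, Finset.sum_mul]
    have h6 : ∑ v, ∑ j ∈ G.neighborFinset v, f v j * z v = 0 := by
      have hsw := nbr_swap G (fun v j => f v j * z v)
      have h7 : ∑ v, ∑ j ∈ G.neighborFinset v, (f v j * z v + f v j * z j) = 0 := by
        refine Finset.sum_eq_zero fun v _ => Finset.sum_eq_zero fun j hj => ?_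
        have hadj := (SimpleGraph.mem_neighborFinset G v j).mp hj
        rw [← mul_add, hzedge hadj, mul_zero]
      have h8 : ∑ v, ∑ j ∈ G.neighborFinset v, (f v j * z v + f v j * z j)
          = (∑ v, ∑ j ∈ G.neighborFinset v, f v j * z v)
            + ∑ v, ∑ j ∈ G.neighborFinset v, f v j * z j := by
        rw [← Finset.sum_add_distrib]
        exact Finset.sum_congr rfl fun v _ => Finset.sum_add_distrib
      have h9 : ∑ v, ∑ j ∈ G.neighborFinset v, f v j * z j
          = ∑ v, ∑ j ∈ G.neighborFinset v, f v j * z v := by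
        rw [nbr_swap G (fun v j => f v j * z j)]
        exact Finset.sum_congr rfl fun v _ => Finset.sum_congr rfl fun j _ => by rw [hf]
      rw [h8, h9] at h7
      linarith
    rw [h5, h6, neg_zero]
  have hzz : z = 0 := by
    have : ⟪z, z⟫ = 0 := by
      have hyz : ⟪y, z⟫ = 0 := (Submodule.mem_orthogonal K z).mp hz y hy
      have : ⟪b0, z⟫ = ⟪y, z⟫ + ⟪z, z⟫ := by rw [hbz, inner_add_left]
      rw [hbz0, hyz] at this
      linarith
    exact inner_self_eq_zero.mp this
  have hbK : b0 ∈ K := by rw [hbz, hzz, add_zero]; exact hy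
  obtain ⟨u, hu⟩ := hbK
  refine ⟨u, fun v => ?_⟩
  have h10 : (T u : V → ℝ) v = b0 v := congrFun (congrArg (fun (g : EuclideanSpace ℝ V) => (g : V → ℝ)) hu) v
  have h11 : ∑ j ∈ G.neighborFinset v, (u v + u j) = -∑ j ∈ G.neighborFinset v, f v j := h10
  rw [Finset.sum_add_distrib, h11]
  ring

end Aux

/-- In each conformal class of positive weights on a finite simple graph `G`,
there is a unique representative `w̄` such that for every vertex the product of
`w̄` over the edges incident to it equals `1`. -/
theorem exists_unique_normalized_representative {V : Type*} [Fintype V] [DecidableEq V]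
    (G : SimpleGraph V) [DecidableRel G.Adj]
    (w : G.edgeSet → ℝ) (hw : ∀ e, 0 < w e) :
    ∃! wbar : G.edgeSet → ℝ,
      (∀ e, 0 < wbar e) ∧
      (∃ u : V → ℝ, ∀ i j, (h : G.Adj i j) →
        wbar ⟨s(i, j), h⟩ = w ⟨s(i, j), h⟩ * Real.exp (u i + u j)) ∧
      (∀ v : V, ∏ e ∈ univ.filter (fun e : G.edgeSet => v ∈ (e : Sym2 V)), wbar e = 1) := by
  classical
  set f : V → V → ℝ := fun i j => if h : G.Adj i j then Real.log (w ⟨s(i, j), h⟩) else 0 with hfdef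
  have hfsymm : ∀ i j, f i j = f j i := by
    intro i j
    by_cases h : G.Adj i j
    · simp only [hfdef, dif_pos h, dif_pos h.symm]
      congr 1
      exact congrArg w (Subtype.ext (Sym2.eq_swap))
    · have h' : ¬ G.Adj j i := fun hh => h hh.symm
      simp [hfdef, h, h']
  have hf0 : ∀ i j, ¬ G.Adj i j → f i j = 0 := by intro i j h; simp [hfdef, h]
  obtain ⟨u, hu⟩ := exists_u G f hfsymm hf0
  -- key: for any positive z conformal via uz, the log-sum at v over incident edges
  have logsum : ∀ (z : G.edgeSet → ℝ) (uz : V → ℝ),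
      (∀ i j, (h : G.Adj i j) → z ⟨s(i, j), h⟩ = w ⟨s(i, j), h⟩ * Real.exp (uz i + uz j)) →
      ∀ v, ∑ e ∈ univ.filter (fun e : G.edgeSet => v ∈ (e : Sym2 V)), Real.log (z e)
        = ∑ j ∈ G.neighborFinset v, (uz v + uz j + f v j) := by
    intro z uz hform v
    rw [sum_incident G v (fun e => Real.log (z e))]
    refine Finset.sum_congr rfl fun j hj => ?_
    have hadj := (SimpleGraph.mem_neighborFinset G v j).mp hj
    rw [dif_pos hadj, hform v j hadj, Real.log_mul (ne_of_gt (hw _)) (Real.exp_ne_zero _),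
      Real.log_exp]
    simp only [hfdef, dif_pos hadj]
    ring
  set wbar : G.edgeSet → ℝ :=
    fun e => w e * Real.exp (Sym2.lift ⟨fun i j => u i + u j, fun i j => by ring⟩ (e : Sym2 V))
    with hwbardef
  have hform : ∀ i j, (h : G.Adj i j) →
      wbar ⟨s(i, j), h⟩ = w ⟨s(i, j), h⟩ * Real.exp (u i + u j) := by
    intro i j h
    simp [hwbardef]
  have hpos : ∀ e, 0 < wbar e := fun e => mul_pos (hw e) (Real.exp_pos _)
  have hprod : ∀ v, ∏ e ∈ univ.filter (fun e : G.edgeSet => v ∈ (e : Sym2 V)), wbar e = 1 := by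
    intro v
    have h1 : ∏ e ∈ univ.filter (fun e : G.edgeSet => v ∈ (e : Sym2 V)), wbar e
        = Real.exp (∑ e ∈ univ.filter (fun e : G.edgeSet => v ∈ (e : Sym2 V)),
            Real.log (wbar e)) := by
      rw [Real.exp_sum]
      exact (Finset.prod_congr rfl fun e _ => (Real.exp_log (hpos e)).symm)
    rw [h1, logsum wbar u hform v, hu v, Real.exp_zero]
  refine ⟨wbar, ⟨hpos, ⟨u, hform⟩, hprod⟩, ?_⟩
  rintro y ⟨hypos, ⟨uy, hyform⟩, hyprod⟩
  -- uniqueness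
  have hylog : ∀ v, ∑ j ∈ G.neighborFinset v, (uy v + uy j + f v j) = 0 := by
    intro v
    rw [← logsum y uy hyform v]
    have := hyprod v
    have h2 : Real.log (∏ e ∈ univ.filter (fun e : G.edgeSet => v ∈ (e : Sym2 V)), y e)
        = ∑ e ∈ univ.filter (fun e : G.edgeSet => v ∈ (e : Sym2 V)), Real.log (y e) :=
      Real.log_prod (fun e _ => ne_of_gt (hypos e))
    rw [this, Real.log_one] at h2
    exact h2.symm
  have hd : ∀ v, ∑ j ∈ G.neighborFinset v, ((uy v - u v) + (uy j - u j)) = 0 := by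
    intro v
    have h3 := hylog v
    have h4 := hu v
    have h5 : ∑ j ∈ G.neighborFinset v, ((uy v - u v) + (uy j - u j))
        = (∑ j ∈ G.neighborFinset v, (uy v + uy j + f v j))
          - ∑ j ∈ G.neighborFinset v, (u v + u j + f v j) := by
      rw [← Finset.sum_sub_distrib]
      exact Finset.sum_congr rfl fun j _ => by ring
    rw [h5, h3, h4, sub_zero]
  have hedge := fun {i j : V} (hij : G.Adj i j) => edge_zero G hd hij
  funext e
  obtain ⟨e, he⟩ := e
  revert he
  refine Sym2.ind (fun i j => ?_) e
  intro he
  have hadj : G.Adj i j := G.mem_edgeSet.mp he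
  have h6 := hedge hadj
  have h7 : uy i + uy j = u i + u j := by linarith
  rw [hyform i j hadj, hform i j hadj, h7]
end

section
/- The generalized edge Laplacian Δ(F,w) := M(F,w)ᵀ·M(F,w) transforms under conformal change of weight as Δ(F,w̃) = D_u·Δ(F,w)·D_u, with D_u the diagonal matrix with entries e^{(u(eᵢ⁺)+u(eᵢ⁻))/2}; hence it is conformally covariant. -/
open Matrix

/-- The signed/unsigned weighted vertex-edge incidence matrix `M(F,w)` of a graph with
vertex set `V` and oriented edge set `E` (each edge `e` has head `hd e` and tail `tl e`). -/
noncomputable def incidenceM {V E : Type*} [DecidableEq V] (hd tl : E → V)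
    (F : Set E) [DecidablePred (· ∈ F)] (w : E → ℝ) : Matrix V E ℝ :=
  Matrix.of fun v e =>
    if e ∈ F then
      (if v = hd e then Real.sqrt (w e) else if v = tl e then -Real.sqrt (w e) else 0)
    else
      (if v = hd e ∨ v = tl e then Real.sqrt (w e) else 0)

/-- The generalized edge Laplacian `Δ(F,w) := M(F,w)ᵀ · M(F,w)`. -/
noncomputable def edgeLaplacian {V E : Type*} [DecidableEq V] [Fintype V] (hd tl : E → V)
    (F : Set E) [DecidablePred (· ∈ F)] (w : E → ℝ) : Matrix E E ℝ :=
  (incidenceM hd tl F w).transpose * incidenceM hd tl F w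

lemma incidenceM_conformal {V E : Type*} [DecidableEq V] [Fintype E] [DecidableEq E]
    (hd tl : E → V) (F : Set E) [DecidablePred (· ∈ F)] (w : E → ℝ) (hw : ∀ e, 0 ≤ w e)
    (u : V → ℝ) :
    incidenceM hd tl F (fun e => w e * Real.exp (u (hd e) + u (tl e))) =
      incidenceM hd tl F w * diagonal (fun e => Real.exp ((u (hd e) + u (tl e)) / 2)) := by
  ext v e
  have hsq : Real.sqrt (w e * Real.exp (u (hd e) + u (tl e))) =
      Real.sqrt (w e) * Real.exp ((u (hd e) + u (tl e)) / 2) := by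
    rw [Real.sqrt_mul (hw e)]
    congr 1
    rw [show Real.exp (u (hd e) + u (tl e)) =
        Real.exp ((u (hd e) + u (tl e)) / 2) ^ 2 by rw [← Real.exp_nat_mul]; ring_nf,
      Real.sqrt_sq (Real.exp_nonneg _)]
  simp only [incidenceM, Matrix.mul_apply, Matrix.of_apply, diagonal_apply]
  rw [Finset.sum_eq_single e (by intro b _ hb; simp [hb]) (by simp)]
  simp only [if_pos rfl]
  split_ifs <;> simp [hsq] <;> ring

/-- Conformal covariance of the generalized edge Laplacian: for
`w̃ e = w e · e^{u(e⁺)+u(e⁻)}`, `Δ(F,w̃) = D_u · Δ(F,w) · D_u` with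
`(D_u)_{ee} = e^{(u(e⁺)+u(e⁻))/2}`. -/
theorem edgeLaplacian_conformally_covariant {V E : Type*} [Fintype V] [Fintype E]
    [DecidableEq V] [DecidableEq E] (hd tl : E → V) (hsimple : ∀ e, hd e ≠ tl e)
    (F : Set E) [DecidablePred (· ∈ F)] (w : E → ℝ) (hw : ∀ e, 0 < w e) (u : V → ℝ) :
    edgeLaplacian hd tl F (fun e => w e * Real.exp (u (hd e) + u (tl e))) =
      diagonal (fun e => Real.exp ((u (hd e) + u (tl e)) / 2)) *
        edgeLaplacian hd tl F w *
        diagonal (fun e => Real.exp ((u (hd e) + u (tl e)) / 2)) := by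
  unfold edgeLaplacian
  rw [incidenceM_conformal hd tl F w (fun e => (hw e).le) u, Matrix.transpose_mul,
    Matrix.diagonal_transpose]
  rw [Matrix.mul_assoc, Matrix.mul_assoc, Matrix.mul_assoc]
end

section
/- Let A(F,w) be a generalized adjacency matrix and suppose H ∈ ker A(F,w). For a conformal change w̃ = w·e^{u(vᵢ)+u(vⱼ)}, the function H̃(v) = e^{-u(v)}H(v) lies in ker A(F,w̃), and for every edge e = (v₁,v₂), H̃(v₁)H̃(v₂)w̃(e) = H(v₁)H(v₂)w(e); i.e., the edge function Ψ_H(e) := H(v₁)H(v₂)w(e) is a conformal invariant. -/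
open Matrix

/-- The generalized adjacency matrix `A(F,w)`: entry `−w i j` on edges in `F`,
`w i j` on edges not in `F`, and `0` off edges. -/
def genAdj {V : Type*} [Fintype V] (G : SimpleGraph V) [DecidableRel G.Adj]
    (F : Set (Sym2 V)) [DecidablePred (· ∈ F)] (w : V → V → ℝ) : Matrix V V ℝ :=
  Matrix.of fun i j =>
    if G.Adj i j then (if s(i, j) ∈ F then -(w i j) else w i j) else 0

/-- If `H ∈ ker A(F,w)` then, under the conformal change `w̃ = w·e^{u i + u j}`,
the function `H̃ v = e^{-u v} H v` lies in `ker A(F,w̃)`, and the edge function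
`Ψ_H(e) = H(v₁)H(v₂)w(e)` is conformally invariant: `H̃ v₁ · H̃ v₂ · w̃ = H v₁ · H v₂ · w`
on every edge. -/
theorem genAdj_kernel_edge_invariant {V : Type*} [Fintype V] [DecidableEq V]
    (G : SimpleGraph V) [DecidableRel G.Adj]
    (F : Set (Sym2 V)) [DecidablePred (· ∈ F)] (hF : F ⊆ G.edgeSet)
    (w : V → V → ℝ) (hsymm : ∀ i j, w i j = w j i)
    (hw : ∀ i j, G.Adj i j → 0 < w i j)
    (u : V → ℝ) (H : V → ℝ)
    (hH : (genAdj G F w).mulVec H = 0) :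
    (genAdj G F (fun i j => w i j * Real.exp (u i + u j))).mulVec
        (fun v => Real.exp (-u v) * H v) = 0 ∧
    ∀ v₁ v₂, G.Adj v₁ v₂ →
      (Real.exp (-u v₁) * H v₁) * (Real.exp (-u v₂) * H v₂) *
          (w v₁ v₂ * Real.exp (u v₁ + u v₂)) =
        H v₁ * H v₂ * w v₁ v₂ := by
  constructor
  · funext i
    have h0 : ∑ j, genAdj G F w i j * H j = 0 := congrFun hH i
    have key : ∀ j, genAdj G F (fun i j => w i j * Real.exp (u i + u j)) i j *
        (Real.exp (-u j) * H j) = Real.exp (u i) * (genAdj G F w i j * H j) := by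
      intro j
      simp only [genAdj, Matrix.of_apply]
      have he : Real.exp (u i + u j) * Real.exp (-u j) = Real.exp (u i) := by
        rw [← Real.exp_add]; congr 1; ring
      split_ifs with h1 h2
      · linear_combination (-(w i j * H j)) * he
      · linear_combination (w i j * H j) * he
      · ring
    show (∑ j, genAdj G F (fun i j => w i j * Real.exp (u i + u j)) i j *
        (Real.exp (-u j) * H j)) = 0
    simp only [key, ← Finset.mul_sum, h0, mul_zero]
  · intro v₁ v₂ _
    have : Real.exp (-u v₁) * Real.exp (-u v₂) * Real.exp (u v₁ + u v₂) = 1 := by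
      rw [← Real.exp_add, ← Real.exp_add]; ring_nf; exact Real.exp_zero
    calc (Real.exp (-u v₁) * H v₁) * (Real.exp (-u v₂) * H v₂) *
          (w v₁ v₂ * Real.exp (u v₁ + u v₂))
        = (Real.exp (-u v₁) * Real.exp (-u v₂) * Real.exp (u v₁ + u v₂)) *
          (H v₁ * H v₂ * w v₁ v₂) := by ring
      _ = H v₁ * H v₂ * w v₁ v₂ := by rw [this, one_mul]
end

section
/- For the cycle graph C_n with 4 | n and weight w, the determinant of the adjacency matrix A_w equals (Π_{i even} w(eᵢ) − Π_{i odd} w(eᵢ))², where e₁,...,eₙ is a cyclic enumeration of the edges. In particular det A_w = 0 iff the product of even-indexed edge weights equals the product of odd-indexed edge weights. -/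
open Matrix Finset
open Equiv Equiv.Perm


lemma sign_addRight_one (N : ℕ) [NeZero N] :
    Equiv.Perm.sign (Equiv.addRight (1 : ZMod N)) = (-1 : ℤˣ) ^ (N - 1) := by
  obtain ⟨k, rfl⟩ := Nat.exists_eq_succ_of_ne_zero (NeZero.ne N)
  have h : (Equiv.addRight (1 : ZMod (k+1))) = finRotate (k+1) := by
    ext x
    show x + 1 = finRotate (k+1) x
    exact (finRotate_succ_apply (x : Fin (k+1))).symm
  rw [h]
  show Equiv.Perm.sign (finRotate (k+1)) = (-1 : ℤˣ) ^ (k.succ - 1)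
  rw [sign_finRotate]


section Aux
variable (m : ℕ) [NeZero m]

lemma twoMulNeZero : NeZero (2*m) := ⟨by have := NeZero.ne m; omega⟩

attribute [local instance] twoMulNeZero

/-- parity homomorphism -/
noncomputable abbrev par : ZMod (2*m) →+* ZMod 2 := ZMod.castHom (dvd_mul_right 2 m) (ZMod 2)

lemma par_natCast (a : ℕ) : par m ((a : ℕ) : ZMod (2*m)) = ((a : ℕ) : ZMod 2) := by
  simp [map_natCast]

lemma par_eq_zero_iff (x : ZMod (2*m)) : par m x = 0 ↔ 2 ∣ x.val := by
  have h1 : par m x = ((x.val : ℕ) : ZMod 2) := by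
    rw [ZMod.castHom_apply, ← ZMod.natCast_val]
  rw [h1, ZMod.natCast_eq_zero_iff]

/-- enumeration of even residues -/
def feq : Fin m ≃ {x : ZMod (2*m) // par m x = 0} where
  toFun k := ⟨((2 * k.val : ℕ) : ZMod (2*m)), by
    rw [par_eq_zero_iff, ZMod.val_cast_of_lt (by have := k.isLt; omega)]
    exact ⟨k.val, rfl⟩⟩
  invFun x := ⟨x.1.val / 2, by have := ZMod.val_lt x.1; omega⟩
  left_inv k := by
    apply Fin.ext
    show (((2 * k.val : ℕ) : ZMod (2*m))).val / 2 = k.val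
    rw [ZMod.val_cast_of_lt (show 2 * k.val < 2*m by have := k.isLt; omega)]
    omega
  right_inv x := by
    obtain ⟨x, hx⟩ := x
    rw [par_eq_zero_iff] at hx
    apply Subtype.ext
    show (((2 * (x.val / 2) : ℕ)) : ZMod (2*m)) = x
    rw [Nat.mul_div_cancel' hx, ZMod.natCast_zmod_val]

/-- enumeration of odd residues -/
def foq : Fin m ≃ {x : ZMod (2*m) // ¬ par m x = 0} where
  toFun k := ⟨((2 * k.val + 1 : ℕ) : ZMod (2*m)), by
    rw [par_eq_zero_iff, ZMod.val_cast_of_lt (by have := k.isLt; omega)]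
    omega⟩
  invFun x := ⟨x.1.val / 2, by have := ZMod.val_lt x.1; omega⟩
  left_inv k := by
    apply Fin.ext
    show (((2 * k.val + 1 : ℕ) : ZMod (2*m))).val / 2 = k.val
    rw [ZMod.val_cast_of_lt (show 2 * k.val + 1 < 2*m by have := k.isLt; omega)]
    omega
  right_inv x := by
    obtain ⟨x, hx⟩ := x
    rw [par_eq_zero_iff] at hx
    apply Subtype.ext
    show (((2 * (x.val / 2) + 1 : ℕ)) : ZMod (2*m)) = x
    have : 2 * (x.val / 2) + 1 = x.val := by omega
    rw [this, ZMod.natCast_zmod_val]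

lemma feq_rot (k : Fin m) : ((feq m (finRotate m k) : ZMod (2*m))) = (feq m k : ZMod (2*m)) + 2 := by
  obtain ⟨m', rfl⟩ := Nat.exists_eq_succ_of_ne_zero (NeZero.ne m)
  rw [finRotate_succ_apply]
  show (((2 * ((k+1 : Fin (m'+1)).val) : ℕ)) : ZMod (2*(m'+1))) = ((2 * k.val : ℕ) : ZMod (2*(m'+1))) + 2
  rcases eq_or_ne k (Fin.last m') with rfl | hk
  · rw [Fin.last_add_one]
    show ((0 : ℕ) : ZMod (2*(m'+1))) = _
    have : ((2 * (Fin.last m').val : ℕ) : ZMod (2*(m'+1))) + 2 = ((2 * m' + 2 : ℕ) : ZMod (2*(m'+1))) := by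
      push_cast; ring
    rw [this]
    have h2 : (2 * m' + 2 : ℕ) = 2*(m'+1) := by ring
    rw [h2, ZMod.natCast_self]
    simp
  · rw [Fin.val_add_one_of_lt (Fin.lt_last_iff_ne_last.mpr hk)]
    push_cast; ring

lemma foq_rot (k : Fin m) : ((foq m (finRotate m k) : ZMod (2*m))) = (foq m k : ZMod (2*m)) + 2 := by
  obtain ⟨m', rfl⟩ := Nat.exists_eq_succ_of_ne_zero (NeZero.ne m)
  rw [finRotate_succ_apply]
  show (((2 * ((k+1 : Fin (m'+1)).val) + 1 : ℕ)) : ZMod (2*(m'+1))) = ((2 * k.val + 1 : ℕ) : ZMod (2*(m'+1))) + 2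
  rcases eq_or_ne k (Fin.last m') with rfl | hk
  · rw [Fin.last_add_one]
    show ((2*0+1 : ℕ) : ZMod (2*(m'+1))) = _
    have : ((2 * (Fin.last m').val + 1 : ℕ) : ZMod (2*(m'+1))) + 2 = ((2*(m'+1) : ℕ) : ZMod (2*(m'+1))) + 1 := by
      push_cast; ring
    rw [this, ZMod.natCast_self]
    simp
  · rw [Fin.val_add_one_of_lt (Fin.lt_last_iff_ne_last.mpr hk)]
    push_cast; ring

end Aux

section Aux2
variable (m : ℕ) [NeZero m]

attribute [local instance] twoMulNeZero

/-- permutation moving the even residues backwards by 2 -/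
noncomputable def tauE : Equiv.Perm (ZMod (2*m)) := ((finRotate m)⁻¹).extendDomain (feq m)

/-- permutation moving the odd residues backwards by 2 -/
noncomputable def tauO : Equiv.Perm (ZMod (2*m)) := ((finRotate m)⁻¹).extendDomain (foq m)

lemma tauE_apply_even {x : ZMod (2*m)} (h : par m x = 0) : tauE m x = x - 2 := by
  set k : Fin m := (feq m).symm ⟨x, h⟩ with hk
  have hx : x = (feq m k : ZMod (2*m)) := by
    rw [hk, Equiv.apply_symm_apply]
  have h1 : tauE m x = ((feq m ((finRotate m)⁻¹ k)) : ZMod (2*m)) := by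
    rw [hx, tauE]
    exact Equiv.Perm.extendDomain_apply_image _ _ _
  have h2 : x = ((feq m ((finRotate m)⁻¹ k)) : ZMod (2*m)) + 2 := by
    conv_lhs => rw [hx, ← Equiv.apply_symm_apply (finRotate m) k]
    exact feq_rot m _
  rw [h1]
  rw [h2]
  ring

lemma tauE_apply_odd {x : ZMod (2*m)} (h : ¬ par m x = 0) : tauE m x = x :=
  Equiv.Perm.extendDomain_apply_not_subtype _ _ h

lemma tauO_apply_odd {x : ZMod (2*m)} (h : ¬ par m x = 0) : tauO m x = x - 2 := by
  set k : Fin m := (foq m).symm ⟨x, h⟩ with hk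
  have hx : x = (foq m k : ZMod (2*m)) := by
    rw [hk, Equiv.apply_symm_apply]
  have h1 : tauO m x = ((foq m ((finRotate m)⁻¹ k)) : ZMod (2*m)) := by
    rw [hx, tauO]
    exact Equiv.Perm.extendDomain_apply_image _ _ _
  have h2 : x = ((foq m ((finRotate m)⁻¹ k)) : ZMod (2*m)) + 2 := by
    conv_lhs => rw [hx, ← Equiv.apply_symm_apply (finRotate m) k]
    exact foq_rot m _
  rw [h1, h2]
  ring

lemma tauO_apply_even {x : ZMod (2*m)} (h : par m x = 0) : tauO m x = x :=
  Equiv.Perm.extendDomain_apply_not_subtype _ _ (by simpa using h)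

lemma sign_tauE : Equiv.Perm.sign (tauE m) = (-1 : ℤˣ) ^ (m - 1) := by
  rw [tauE, Equiv.Perm.sign_extendDomain, map_inv]
  obtain ⟨m', rfl⟩ := Nat.exists_eq_succ_of_ne_zero (NeZero.ne m)
  rw [sign_finRotate]
  simp

lemma sign_tauO : Equiv.Perm.sign (tauO m) = (-1 : ℤˣ) ^ (m - 1) := by
  rw [tauO, Equiv.Perm.sign_extendDomain, map_inv]
  obtain ⟨m', rfl⟩ := Nat.exists_eq_succ_of_ne_zero (NeZero.ne m)
  rw [sign_finRotate]
  simp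

lemma zmodTwoNeZero (hm : 1 < m) : (2 : ZMod (2*m)) ≠ 0 := by
  have : ((2:ℕ) : ZMod (2*m)) ≠ 0 := by
    rw [Ne, ZMod.natCast_eq_zero_iff]
    intro h
    have := Nat.le_of_dvd (by norm_num) h
    omega
  simpa using this

lemma classify (σ : Equiv.Perm (ZMod (2*m))) (hm : 1 < m)
    (hσ : ∀ i, σ i = i ∨ σ i = i - 2) :
    σ = 1 ∨ σ = Equiv.addRight (-2 : ZMod (2*m)) ∨ σ = tauE m ∨ σ = tauO m := by
  have h2 : (2 : ZMod (2*m)) ≠ 0 := zmodTwoNeZero m hm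
  have step : ∀ x, σ x = x - 2 → σ (x - 2) = (x - 2) - 2 := by
    intro x hx
    rcases hσ (x - 2) with h | h
    · exfalso
      have := σ.injective (hx.trans h.symm)
      apply h2
      linear_combination this
    · exact h
  have iter : ∀ (k : ℕ) (x), σ x = x - 2 → σ (x - 2 * k) = x - 2 * k - 2 := by
    intro k
    induction k with
    | zero => intro x hx; simpa using hx
    | succ k ih =>
      intro x hx
      have h1 := step _ (ih x hx)
      have e : x - 2 * (k+1 : ℕ) = x - 2 * (k:ℕ) - 2 := by push_cast; ring
      rw [e]
      exact h1
  have spread : ∀ x y, σ x = x - 2 → par m x = par m y → σ y = y - 2 := by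
    intro x y hx hxy
    have hpar : par m (x - y) = 0 := by rw [map_sub, hxy, sub_self]
    rw [par_eq_zero_iff] at hpar
    obtain ⟨c, hc⟩ := hpar
    have hv : (((x - y).val : ℕ) : ZMod (2*m)) = x - y := ZMod.natCast_zmod_val _
    rw [hc] at hv
    have hy : y = x - 2 * (c : ℕ) := by
      push_cast at hv ⊢
      linear_combination hv
    rw [hy]
    exact iter c x hx
  have spread' : ∀ x y, σ x = x → par m x = par m y → σ y = y := by
    intro x y hx hxy
    rcases hσ y with h | h
    · exact h
    · exfalso
      have := spread y x h hxy.symm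
      rw [hx] at this
      apply h2
      linear_combination this
  have hpar0 : par m (0 : ZMod (2*m)) = 0 := map_zero _
  have hpar1 : ¬ par m (1 : ZMod (2*m)) = 0 := by
    rw [_root_.map_one]; decide
  have hcases : ∀ z : ZMod 2, z = 0 ∨ z = 1 := by decide
  have keyE : ∀ x, par m x = 0 → par m x = par m (0 : ZMod (2*m)) := by
    intro x hx; rw [hx, hpar0]
  have keyO : ∀ x, ¬ par m x = 0 → par m x = par m (1 : ZMod (2*m)) := by
    intro x hx
    rcases hcases (par m x) with h | h
    · exact absurd h hx
    · rw [h, _root_.map_one]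
  rcases hσ 0 with h0 | h0 <;> rcases hσ 1 with h1 | h1
  · left
    ext x
    show σ x = x
    by_cases hx : par m x = 0
    · exact spread' 0 x h0 (keyE x hx).symm
    · exact spread' 1 x h1 (keyO x hx).symm
  · right; right; right
    ext x
    by_cases hx : par m x = 0
    · rw [tauO_apply_even m hx]
      exact spread' 0 x h0 (keyE x hx).symm
    · rw [tauO_apply_odd m hx]
      exact spread 1 x h1 (keyO x hx).symm
  · right; right; left
    ext x
    by_cases hx : par m x = 0
    · rw [tauE_apply_even m hx]
      exact spread 0 x h0 (keyE x hx).symm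
    · rw [tauE_apply_odd m hx]
      exact spread' 1 x h1 (keyO x hx).symm
  · right; left
    ext x
    show σ x = x + (-2)
    rw [← sub_eq_add_neg]
    by_cases hx : par m x = 0
    · exact spread 0 x h0 (keyE x hx).symm
    · exact spread 1 x h1 (keyO x hx).symm

end Aux2

/-- For the cycle graph `C_n` with `4 ∣ n`, vertices `ZMod n` and edge `eᵢ = (vᵢ, vᵢ₊₁)`
carrying weight `w i`, the determinant of the weighted adjacency matrix equals
`(Π_{i even} w(eᵢ) − Π_{i odd} w(eᵢ))²`.  In particular it vanishes iff the product of
the even-indexed edge weights equals the product of the odd-indexed ones. -/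
theorem det_adjacency_cycle (n : ℕ) [NeZero n] (h4 : 4 ∣ n)
    (w : ZMod n → ℝ) (hw : ∀ i, 0 < w i) :
    (Matrix.of fun i j : ZMod n =>
        if j = i + 1 then w i else if i = j + 1 then w j else 0).det =
      ((∏ i ∈ univ.filter (fun i : Fin n => Even i.val), w ((i : ℕ) : ZMod n)) -
        ∏ i ∈ univ.filter (fun i : Fin n => Odd i.val), w ((i : ℕ) : ZMod n)) ^ 2 := by
  classical
  obtain ⟨m, rfl⟩ : ∃ m, n = 2 * m := ⟨n / 2, by obtain ⟨l, hl⟩ := h4; omega⟩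
  have hne2m := NeZero.ne (2*m)
  haveI : NeZero m := ⟨by omega⟩
  have hm1 : 1 < m := by obtain ⟨l, hl⟩ := h4; omega
  have h2 : (2 : ZMod (2*m)) ≠ 0 := zmodTwoNeZero m hm1
  have hoddm : Odd (m - 1) := by obtain ⟨l, hl⟩ := h4; rw [Nat.odd_iff]; omega
  have hodd2m : Odd (2*m - 1) := by rw [Nat.odd_iff]; omega
  set B : Matrix (ZMod (2*m)) (ZMod (2*m)) ℝ :=
    Matrix.of (fun i j => if j = i then w i else if j = i + 2 then w (i+1) else 0) with hB
  have hBdiag : ∀ i : ZMod (2*m), B i i = w i := by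
    intro i; rw [hB, Matrix.of_apply, if_pos rfl]
  have hBdown : ∀ i : ZMod (2*m), B (i - 2) i = w (i - 1) := by
    intro i
    rw [hB, Matrix.of_apply, if_neg (fun h => h2 (by linear_combination h)),
      if_pos (show i = i - 2 + 2 by ring), show i - 2 + 1 = i - 1 by ring]
  have hBoff : ∀ a b : ZMod (2*m), b ≠ a → b ≠ a + 2 → B a b = 0 := by
    intro a b ha hb
    rw [hB, Matrix.of_apply, if_neg ha, if_neg hb]
  set Pe : ℝ := ∏ x ∈ univ.filter (fun x : ZMod (2*m) => par m x = 0), w x with hPe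
  set Po : ℝ := ∏ x ∈ univ.filter (fun x : ZMod (2*m) => ¬ par m x = 0), w x with hPo
  have hz2 : ∀ z : ZMod 2, z ≠ 0 → z = 1 := by decide
  -- rotating the rows
  have hsub : (Matrix.of fun i j : ZMod (2*m) =>
      if j = i + 1 then w i else if i = j + 1 then w j else 0) =
      B.submatrix (Equiv.addRight (-1 : ZMod (2*m))) id := by
    ext i j
    show (if j = i + 1 then w i else if i = j + 1 then w j else 0) = B (i + (-1)) j
    rw [hB, Matrix.of_apply]
    by_cases hji : j = i + 1
    · rw [if_pos hji, if_neg (fun h : j = i + (-1) => h2 (by rw [hji] at h; linear_combination h)),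
        if_pos (show j = i + (-1) + 2 by rw [hji]; ring), show i + (-1) + 1 = i by ring]
    · by_cases hij : i = j + 1
      · rw [if_neg hji, if_pos hij, if_pos (show j = i + (-1) by linear_combination -hij),
          show i + (-1) = j by linear_combination hij]
      · rw [if_neg hji, if_neg hij, if_neg (fun h : j = i + (-1) => hij (by linear_combination -h)),
          if_neg (fun h : j = i + (-1) + 2 => hji (by linear_combination h))]
  have hsign1 : Equiv.Perm.sign (Equiv.addRight (-1 : ZMod (2*m))) = -1 := by
    rw [show Equiv.addRight (-1 : ZMod (2*m)) = (Equiv.addRight 1)⁻¹ from (Equiv.addRight_symm 1).symm, Equiv.Perm.sign_inv, sign_addRight_one (2*m)]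
    exact hodd2m.neg_one_pow
  have hdetA : (Matrix.of fun i j : ZMod (2*m) =>
      if j = i + 1 then w i else if i = j + 1 then w j else 0).det = - B.det := by
    rw [hsub, Matrix.det_permute, hsign1]
    push_cast
    ring
  -- the four permutations
  have tE0 : tauE m (0 : ZMod (2*m)) = 0 - 2 := tauE_apply_even m (map_zero _)
  have tE1 : tauE m (1 : ZMod (2*m)) = 1 := tauE_apply_odd m (by rw [_root_.map_one]; decide)
  have tO0 : tauO m (0 : ZMod (2*m)) = 0 := tauO_apply_even m (map_zero _)
  have tO1 : tauO m (1 : ZMod (2*m)) = 1 - 2 := tauO_apply_odd m (by rw [_root_.map_one]; decide)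
  have s2ap : ∀ x : ZMod (2*m), Equiv.addRight (-2 : ZMod (2*m)) x = x + (-2) := fun x => rfl
  have one_ap : ∀ x : ZMod (2*m), (1 : Equiv.Perm (ZMod (2*m))) x = x := fun x => rfl
  have neq_of : ∀ (f g : Equiv.Perm (ZMod (2*m))) (x : ZMod (2*m)), f x ≠ g x → f ≠ g :=
    fun f g x hx h => hx (by rw [h])
  have ne_1_s2 : (1 : Equiv.Perm (ZMod (2*m))) ≠ Equiv.addRight (-2 : ZMod (2*m)) :=
    neq_of _ _ 0 (by rw [one_ap, s2ap]; intro h; exact h2 (by linear_combination h))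
  have ne_1_tE : (1 : Equiv.Perm (ZMod (2*m))) ≠ tauE m :=
    neq_of _ _ 0 (by rw [one_ap, tE0]; intro h; exact h2 (by linear_combination h))
  have ne_1_tO : (1 : Equiv.Perm (ZMod (2*m))) ≠ tauO m :=
    neq_of _ _ 1 (by rw [one_ap, tO1]; intro h; exact h2 (by linear_combination h))
  have ne_s2_tE : Equiv.addRight (-2 : ZMod (2*m)) ≠ tauE m :=
    neq_of _ _ 1 (by rw [s2ap, tE1]; intro h; exact h2 (by linear_combination -h))
  have ne_s2_tO : Equiv.addRight (-2 : ZMod (2*m)) ≠ tauO m :=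
    neq_of _ _ 0 (by rw [s2ap, tO0]; intro h; exact h2 (by linear_combination -h))
  have ne_tE_tO : tauE m ≠ tauO m :=
    neq_of _ _ 0 (by rw [tE0, tO0]; intro h; exact h2 (by linear_combination -h))
  -- only four permutations contribute
  have hsum : B.det = ∑ σ ∈ ({1, Equiv.addRight (-2 : ZMod (2*m)), tauE m, tauO m} :
      Finset (Equiv.Perm (ZMod (2*m)))),
      ((Equiv.Perm.sign σ : ℤ) : ℝ) * ∏ i, B (σ i) i := by
    rw [Matrix.det_apply']
    symm
    apply Finset.sum_subset (Finset.subset_univ _)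
    intro σ _ hσ
    by_contra hne0
    apply hσ
    have hall : ∀ i, σ i = i ∨ σ i = i - 2 := by
      intro i
      by_contra hcon
      push_neg at hcon
      apply hne0
      have hzero : B (σ i) i = 0 :=
        hBoff (σ i) i (fun h => hcon.1 h.symm) (fun h => hcon.2 (by linear_combination -h))
      rw [Finset.prod_eq_zero (f := fun j => B (σ j) j) (Finset.mem_univ i) hzero, mul_zero]
    rcases classify m σ hm1 hall with h | h | h | h <;> simp [h]
  -- shifted products
  have shiftE : ∏ x ∈ univ.filter (fun x : ZMod (2*m) => par m x = 0), w (x - 1) = Po := by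
    rw [hPo]
    refine Finset.prod_nbij' (fun x => x - 1) (fun y => y + 1) ?_ ?_ ?_ ?_ ?_
    · intro a ha
      simp only [Finset.mem_filter, Finset.mem_univ, true_and] at ha ⊢
      rw [map_sub, ha, _root_.map_one]
      decide
    · intro a ha
      simp only [Finset.mem_filter, Finset.mem_univ, true_and] at ha ⊢
      rw [map_add, hz2 _ ha, _root_.map_one]
      decide
    · intro a _; ring
    · intro a _; ring
    · intro a _; rfl
  have shiftO : ∏ x ∈ univ.filter (fun x : ZMod (2*m) => ¬ par m x = 0), w (x - 1) = Pe := by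
    rw [hPe]
    refine Finset.prod_nbij' (fun x => x - 1) (fun y => y + 1) ?_ ?_ ?_ ?_ ?_
    · intro a ha
      simp only [Finset.mem_filter, Finset.mem_univ, true_and] at ha ⊢
      rw [map_sub, hz2 _ ha, _root_.map_one, sub_self]
    · intro a ha
      simp only [Finset.mem_filter, Finset.mem_univ, true_and] at ha ⊢
      rw [map_add, ha, _root_.map_one]
      decide
    · intro a _; ring
    · intro a _; ring
    · intro a _; rfl
  -- the four terms
  have t1 : ((Equiv.Perm.sign (1 : Equiv.Perm (ZMod (2*m))) : ℤ) : ℝ) *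
      ∏ i, B ((1 : Equiv.Perm (ZMod (2*m))) i) i = Pe * Po := by
    rw [Equiv.Perm.sign_one]
    have hp : ∏ i, B ((1 : Equiv.Perm (ZMod (2*m))) i) i = ∏ i, w i :=
      Finset.prod_congr rfl (fun i _ => by rw [one_ap, hBdiag])
    rw [hp, ← Finset.prod_filter_mul_prod_filter_not univ (fun x : ZMod (2*m) => par m x = 0) w]
    simp [hPe, hPo]
  have t2 : ((Equiv.Perm.sign (Equiv.addRight (-2 : ZMod (2*m))) : ℤ) : ℝ) *
      ∏ i, B (Equiv.addRight (-2 : ZMod (2*m)) i) i = Pe * Po := by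
    have hsgn : Equiv.Perm.sign (Equiv.addRight (-2 : ZMod (2*m))) = 1 := by
      rw [show (-2 : ZMod (2*m)) = -1 + -1 by ring, Equiv.addRight_add, _root_.map_mul,
        hsign1]
      decide
    have hp : ∏ i, B (Equiv.addRight (-2 : ZMod (2*m)) i) i = ∏ i : ZMod (2*m), w (i - 1) :=
      Finset.prod_congr rfl (fun i _ => by
        rw [s2ap, show i + (-2 : ZMod (2*m)) = i - 2 by ring, hBdown])
    have hp2 : ∏ i : ZMod (2*m), w (i - 1) = ∏ i : ZMod (2*m), w i :=
      Equiv.prod_comp (Equiv.subRight (1 : ZMod (2*m))) w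
    rw [hsgn, hp, hp2,
      ← Finset.prod_filter_mul_prod_filter_not univ (fun x : ZMod (2*m) => par m x = 0) w]
    simp [hPe, hPo]
  have t3 : ((Equiv.Perm.sign (tauE m) : ℤ) : ℝ) * ∏ i, B (tauE m i) i = -(Po * Po) := by
    have hsgn : Equiv.Perm.sign (tauE m) = -1 := by
      rw [sign_tauE m]; exact hoddm.neg_one_pow
    have hp : ∏ i, B (tauE m i) i = Po * Po := by
      rw [← Finset.prod_filter_mul_prod_filter_not univ (fun x : ZMod (2*m) => par m x = 0)
        (fun i => B (tauE m i) i)]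
      have hA : ∏ x ∈ univ.filter (fun x : ZMod (2*m) => par m x = 0), B (tauE m x) x = Po := by
        rw [← shiftE]
        refine Finset.prod_congr rfl (fun x hx => ?_)
        have hx0 : par m x = 0 := (Finset.mem_filter.mp hx).2
        rw [tauE_apply_even m hx0, hBdown]
      have hBo : ∏ x ∈ univ.filter (fun x : ZMod (2*m) => ¬ par m x = 0), B (tauE m x) x = Po := by
        rw [hPo]
        refine Finset.prod_congr rfl (fun x hx => ?_)
        have hx1 : ¬ par m x = 0 := (Finset.mem_filter.mp hx).2
        rw [tauE_apply_odd m hx1, hBdiag]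
      rw [hA, hBo]
    rw [hsgn, hp]
    simp
  have t4 : ((Equiv.Perm.sign (tauO m) : ℤ) : ℝ) * ∏ i, B (tauO m i) i = -(Pe * Pe) := by
    have hsgn : Equiv.Perm.sign (tauO m) = -1 := by
      rw [sign_tauO m]; exact hoddm.neg_one_pow
    have hp : ∏ i, B (tauO m i) i = Pe * Pe := by
      rw [← Finset.prod_filter_mul_prod_filter_not univ (fun x : ZMod (2*m) => par m x = 0)
        (fun i => B (tauO m i) i)]
      have hA : ∏ x ∈ univ.filter (fun x : ZMod (2*m) => par m x = 0), B (tauO m x) x = Pe := by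
        rw [hPe]
        refine Finset.prod_congr rfl (fun x hx => ?_)
        have hx0 : par m x = 0 := (Finset.mem_filter.mp hx).2
        rw [tauO_apply_even m hx0, hBdiag]
      have hBo : ∏ x ∈ univ.filter (fun x : ZMod (2*m) => ¬ par m x = 0), B (tauO m x) x = Pe := by
        rw [← shiftO]
        refine Finset.prod_congr rfl (fun x hx => ?_)
        have hx1 : ¬ par m x = 0 := (Finset.mem_filter.mp hx).2
        rw [tauO_apply_odd m hx1, hBdown]
      rw [hA, hBo]
    rw [hsgn, hp]
    simp
  have hBdet : B.det = Pe * Po + Pe * Po - Po * Po - Pe * Pe := by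
    rw [hsum, Finset.sum_insert (by
        simp only [Finset.mem_insert, Finset.mem_singleton]
        push_neg
        exact ⟨ne_1_s2, ne_1_tE, ne_1_tO⟩),
      Finset.sum_insert (by
        simp only [Finset.mem_insert, Finset.mem_singleton]
        push_neg
        exact ⟨ne_s2_tE, ne_s2_tO⟩),
      Finset.sum_insert (by simpa using ne_tE_tO), Finset.sum_singleton, t1, t2, t3, t4]
    ring
  -- identify the parity products with the `Fin` products
  have hPeF : (∏ i ∈ univ.filter (fun i : Fin (2*m) => Even i.val), w ((i : ℕ) : ZMod (2*m))) =
      Pe := by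
    rw [hPe]
    refine Finset.prod_nbij' (fun i : Fin (2*m) => ((i : ℕ) : ZMod (2*m)))
      (fun x => ⟨x.val, ZMod.val_lt x⟩) ?_ ?_ ?_ ?_ ?_
    · intro a ha
      simp only [Finset.mem_filter, Finset.mem_univ, true_and] at ha ⊢
      rw [par_natCast, ZMod.natCast_eq_zero_iff]
      exact ha.two_dvd
    · intro x hx
      simp only [Finset.mem_filter, Finset.mem_univ, true_and] at hx ⊢
      rw [par_eq_zero_iff] at hx
      obtain ⟨c, hc⟩ := hx
      exact ⟨c, by omega⟩
    · intro a _
      apply Fin.ext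
      simp [ZMod.val_cast_of_lt a.isLt]
    · intro x _
      exact ZMod.natCast_zmod_val x
    · intro a _; rfl
  have hPoF : (∏ i ∈ univ.filter (fun i : Fin (2*m) => Odd i.val), w ((i : ℕ) : ZMod (2*m))) =
      Po := by
    rw [hPo]
    refine Finset.prod_nbij' (fun i : Fin (2*m) => ((i : ℕ) : ZMod (2*m)))
      (fun x => ⟨x.val, ZMod.val_lt x⟩) ?_ ?_ ?_ ?_ ?_
    · intro a ha
      simp only [Finset.mem_filter, Finset.mem_univ, true_and] at ha ⊢
      rw [par_natCast, ZMod.natCast_eq_zero_iff]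
      rw [Nat.odd_iff] at ha
      omega
    · intro x hx
      simp only [Finset.mem_filter, Finset.mem_univ, true_and] at hx ⊢
      rw [par_eq_zero_iff] at hx
      rw [Nat.odd_iff]
      omega
    · intro a _
      apply Fin.ext
      simp [ZMod.val_cast_of_lt a.isLt]
    · intro x _
      exact ZMod.natCast_zmod_val x
    · intro a _; rfl
  rw [hPeF, hPoF, hdetA, hBdet]
  ring
end
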